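/- The sum of d'Alembertian elements is d'Alembertian: Let (F, D) be a differential field of characteristic zero and K a subfield of F closed under D. Call an element y ∈ F d'Alembertian over K if there exist n ≥ 1 and r₁, …, r_n ∈ K such that (D − r_n)⋯(D − r₁)y = 0, where (D − r) denotes the map z ↦ D(z) − r·z. If t, u ∈ F are d'Alembertian over K, then t + u is d'Alembertian over K. -/

import Mathlib

/-- Iterated application of the first-order linear differential operators `D − r` for
`r` running through the list `rs`: `applyOps D [r₁, …, rₙ] y = (D − rₙ)⋯(D − r₁) y`. -/
def applyOps {F : Type} [Field F] (D : F → F) : List F → F → F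
  | [], y => y
  | r :: rs, y => applyOps D rs (D y - r * y)

/-- `y ∈ F` is d'Alembertian over the differential subfield `K` if there are `n ≥ 1`
and `r₁, …, rₙ ∈ K` with `(D − rₙ)⋯(D − r₁) y = 0`. -/
def IsDAlembertian {F : Type} [Field F] (D : F → F) (K : Subfield F) (y : F) : Prop :=
  ∃ rs : List F, rs ≠ [] ∧ (∀ r ∈ rs, r ∈ K) ∧ applyOps D rs y = 0

section Aux

variable {F : Type} [Field F] (D : F → F)

theorem applyOps_nil (y : F) : applyOps D [] y = y := rfl

theorem applyOps_cons (r : F) (rs : List F) (y : F) :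
    applyOps D (r :: rs) y = applyOps D rs (D y - r * y) := rfl

theorem applyOps_append (L M : List F) (y : F) :
    applyOps D (L ++ M) y = applyOps D M (applyOps D L y) := by
  induction L generalizing y with
  | nil => rfl
  | cons a l ih => simp [applyOps_cons, ih]

theorem applyOps_mem (K : Subfield F) (hK : ∀ x ∈ K, D x ∈ K) (L : List F)
    (hL : ∀ r ∈ L, r ∈ K) (y : F) (hy : y ∈ K) : applyOps D L y ∈ K := by
  induction L generalizing y with
  | nil => exact hy
  | cons r l ih =>
    rw [applyOps_cons]
    exact ih (fun s hs => hL s (List.mem_cons_of_mem _ hs))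
      _ (K.sub_mem (hK y hy) (K.mul_mem (hL r List.mem_cons_self) hy))

variable (hDadd : ∀ x y : F, D (x + y) = D x + D y)

include hDadd

theorem D_zero : D 0 = 0 := by
  have h := hDadd 0 0
  rw [add_zero] at h
  linear_combination -h

theorem D_sub (a b : F) : D (a - b) = D a - D b := by
  have h := hDadd (a - b) b
  rw [sub_add_cancel] at h
  linear_combination -h

theorem applyOps_add (L : List F) (a b : F) :
    applyOps D L (a + b) = applyOps D L a + applyOps D L b := by
  induction L generalizing a b with
  | nil => rfl
  | cons r l ih =>
    rw [applyOps_cons, applyOps_cons, applyOps_cons]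
    have h : D (a + b) - r * (a + b) = (D a - r * a) + (D b - r * b) := by
      rw [hDadd]; ring
    rw [h, ih]

variable (hDmul : ∀ x y : F, D (x * y) = x * D y + y * D x)

include hDmul

/-- conjugation: dividing by `t` with `D t = c * t` shifts the operator list by `-c`. -/
theorem applyOps_conj_div (t c : F) (ht : t ≠ 0) (htc : D t = c * t) (L : List F) (y : F) :
    applyOps D (L.map (· - c)) (y / t) = applyOps D L y / t := by
  induction L generalizing y with
  | nil => rfl
  | cons s l ih =>
    rw [List.map_cons, applyOps_cons, applyOps_cons]
    have hDy : D y = t * D (y / t) + (y / t) * D t := by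
      have := hDmul t (y / t)
      rwa [mul_div_cancel₀ _ ht] at this
    have key : D (y / t) - (s - c) * (y / t) = (D y - s * y) / t := by
      rw [hDy, htc]
      field_simp
      ring
    rw [key, ih]

/-- conjugation: multiplying by `t` with `D t = c * t` shifts the operator list by `+c`. -/
theorem applyOps_conj_mul (t c : F) (htc : D t = c * t) (L : List F) (y : F) :
    applyOps D (L.map (· + c)) (t * y) = t * applyOps D L y := by
  induction L generalizing y with
  | nil => rfl
  | cons s l ih =>
    rw [List.map_cons, applyOps_cons, applyOps_cons]
    have key : D (t * y) - (s + c) * (t * y) = t * (D y - s * y) := by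
      rw [hDmul, htc]; ring
    rw [key, ih]

/-- Lemma A: d'Alembertian elements are closed under the operators `D - r`, `r ∈ K`. -/
theorem isDAlembertian_sub_op (K : Subfield F) (hK : ∀ x ∈ K, D x ∈ K) :
    ∀ (rs : List F), rs ≠ [] → (∀ s ∈ rs, s ∈ K) →
      ∀ u r : F, r ∈ K → applyOps D rs u = 0 →
        IsDAlembertian D K (D u - r * u) := by
  intro rs
  induction rs with
  | nil => intro h; exact absurd rfl h
  | cons s ss ih =>
    intro _ hmem u r hr h0
    rw [applyOps_cons] at h0
    have hs : s ∈ K := hmem s List.mem_cons_self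
    have hssmem : ∀ x ∈ ss, x ∈ K := fun x hx => hmem x (List.mem_cons_of_mem _ hx)
    by_cases hsr : s = r
    · subst hsr
      rcases eq_or_ne ss [] with rfl | hss
      · rw [applyOps_nil] at h0
        refine ⟨[0], by simp, ?_, ?_⟩
        · intro x hx; rw [List.mem_singleton] at hx; subst hx; exact K.zero_mem
        · rw [applyOps_cons, applyOps_nil, h0, D_zero D hDadd]; ring
      · exact ⟨ss, hss, hssmem, h0⟩
    · have hg0 : s - r ≠ 0 := sub_ne_zero.mpr hsr
      have hgK : s - r ∈ K := K.sub_mem hs hr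
      have hhK : D (s - r) / (s - r) ∈ K := K.div_mem (hK _ hgK) hgK
      have hhg : D (s - r) / (s - r) * (s - r) = D (s - r) := div_mul_cancel₀ _ hg0
      have hDg : D (s - r) = D s - D r := D_sub D hDadd s r
      have hrK' : s + D (s - r) / (s - r) ∈ K := K.add_mem hs hhK
      have key : D (D u - r * u) - (s + D (s - r) / (s - r)) * (D u - r * u)
          = D (D u - s * u) - (s + D (s - r) / (s - r) - (s - r)) * (D u - s * u) := by
        rw [D_sub D hDadd (D u) (r * u), D_sub D hDadd (D u) (s * u), hDmul r u, hDmul s u]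
        linear_combination (-u) * hhg + (-u) * hDg
      rcases eq_or_ne ss [] with rfl | hss
      · rw [applyOps_nil] at h0
        refine ⟨[s + D (s - r) / (s - r)], by simp, ?_, ?_⟩
        · intro x hx; rw [List.mem_singleton] at hx; subst hx; exact hrK'
        · rw [applyOps_cons, applyOps_nil, key, h0, D_zero D hDadd]; ring
      · obtain ⟨L, hL1, hL2, hL3⟩ :=
          ih hss hssmem (D u - s * u) (s + D (s - r) / (s - r) - (s - r))
            (K.sub_mem hrK' hgK) h0
        refine ⟨(s + D (s - r) / (s - r)) :: L, by simp, ?_, ?_⟩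
        · intro x hx
          rcases List.mem_cons.mp hx with rfl | hx
          · exact hrK'
          · exact hL2 x hx
        · rw [applyOps_cons, key]
          exact hL3

/-- Main induction for the addition theorem. -/
theorem dAlembertian_add_aux (K : Subfield F) (hK : ∀ x ∈ K, D x ∈ K) :
    ∀ (rs : List F), rs ≠ [] → (∀ r ∈ rs, r ∈ K) →
      ∀ t u : F, applyOps D rs t = 0 → IsDAlembertian D K u →
        IsDAlembertian D K (t + u) := by
  intro rs
  induction rs with
  | nil => intro h; exact absurd rfl h
  | cons r₁ rs' ih =>
    intro _ hmem t u hrs3 hu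
    have hr₁ : r₁ ∈ K := hmem r₁ List.mem_cons_self
    have hrs'mem : ∀ x ∈ rs', x ∈ K := fun x hx => hmem x (List.mem_cons_of_mem _ hx)
    rw [applyOps_cons] at hrs3
    rcases eq_or_ne rs' [] with rfl | hrs' 
    · -- base case: D t = r₁ * t
      rw [applyOps_nil] at hrs3
      have hDt : D t = r₁ * t := by linear_combination hrs3
      by_cases ht0 : t = 0
      · subst ht0; rwa [zero_add]
      obtain ⟨ss, hss1, hss2, hss3⟩ := hu
      have hMmem : ∀ x ∈ ss.map (· - r₁), x ∈ K := by
        intro x hx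
        rw [List.mem_map] at hx
        obtain ⟨s, hs, rfl⟩ := hx
        exact K.sub_mem (hss2 s hs) hr₁
      set w := applyOps D (ss.map (· - r₁)) 1 with hw
      have hwK : w ∈ K := applyOps_mem D K hK _ hMmem 1 K.one_mem
      classical
      set c := if w = 0 then 0 else D w / w with hc
      have hcK : c ∈ K := by
        rw [hc]; split
        · exact K.zero_mem
        · exact K.div_mem (hK w hwK) hwK
      have hwc : D w - c * w = 0 := by
        rw [hc]; split
        · rename_i h0
          rw [h0, D_zero D hDadd]; ring
        · rename_i h0
          field_simp
          ring
      refine ⟨(ss.map (· - r₁) ++ [c]).map (· + r₁), by simp, ?_, ?_⟩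
      · intro x hx
        rw [List.mem_map] at hx
        obtain ⟨s, hs, rfl⟩ := hx
        rcases List.mem_append.mp hs with hs | hs
        · exact K.add_mem (hMmem s hs) hr₁
        · rw [List.mem_singleton] at hs; subst hs; exact K.add_mem hcK hr₁
      · have htu : t + u = t * (1 + u / t) := by field_simp
        rw [htu, applyOps_conj_mul D hDadd hDmul t r₁ hDt,
          applyOps_append, applyOps_add D hDadd,
          applyOps_conj_div D hDadd hDmul t r₁ ht0 hDt ss u, hss3, zero_div, ← hw,
          add_zero, applyOps_cons, applyOps_nil, hwc, mul_zero]
    · -- inductive step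
      obtain ⟨ss, hss1, hss2, hss3⟩ := hu
      have hv : IsDAlembertian D K (D u - r₁ * u) :=
        isDAlembertian_sub_op D hDadd hDmul K hK ss hss1 hss2 u r₁ hr₁ hss3
      obtain ⟨L, hL1, hL2, hL3⟩ := ih hrs' hrs'mem (D t - r₁ * t) (D u - r₁ * u) hrs3 hv
      refine ⟨r₁ :: L, by simp, ?_, ?_⟩
      · intro x hx
        rcases List.mem_cons.mp hx with rfl | hx
        · exact hr₁
        · exact hL2 x hx
      · rw [applyOps_cons]
        have key : D (t + u) - r₁ * (t + u) = (D t - r₁ * t) + (D u - r₁ * u) := by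
          rw [hDadd]; ring
        rw [key]
        exact hL3

end Aux

/-- **The sum of d'Alembertian elements is d'Alembertian.**
Let `(F, D)` be a differential field of characteristic zero and `K` a subfield of `F`
closed under `D`. If `t, u ∈ F` are d'Alembertian over `K`, then so is `t + u`. -/
theorem dAlembertian_add
    {F : Type} [Field F] [CharZero F]
    (D : F → F)
    (hDadd : ∀ x y : F, D (x + y) = D x + D y)
    (hDmul : ∀ x y : F, D (x * y) = x * D y + y * D x)
    (K : Subfield F) (hK : ∀ x ∈ K, D x ∈ K)
    (t u : F)
    (ht : IsDAlembertian D K t) (hu : IsDAlembertian D K u) :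
    IsDAlembertian D K (t + u) := by
  obtain ⟨rs, hrs1, hrs2, hrs3⟩ := ht
  exact dAlembertian_add_aux D hDadd hDmul K hK rs hrs1 hrs2 t u hrs3 hu
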